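/- Define μ on invertible data by μ([[x₁, y₁], [x₂, y₂]]) = [[y₁(x₂+y₂)/(x₁+y₁), x₁(x₂+y₂)/(x₁+y₁)], [y₂(x₁+y₁)/(x₂+y₂), x₂(x₁+y₁)/(x₂+y₂)]] and ν by ν([[x₁, y₁], [x₂, y₂]]) = [[-y₁(x₁-y₂)/(x₂-y₁), -x₁(x₂-y₁)/(x₁-y₂)], [-y₂(x₂-y₁)/(x₁-y₂), -x₂(x₁-y₂)/(x₂-y₁)]]. Then for complex numbers x₁, x₂, y₁, y₂ with x₁+y₁ ≠ 0 and x₂+y₂ ≠ 0, writing μ([[x₁,y₁],[x₂,y₂]]) = [[y₁', x₁'],[y₂', x₂']], one has (whenever the relevant denominators are nonzero) ν([[x₁, y₁'],[x₂, y₂']]) = [[-y₁, -x₁'],[-y₂, -x₂']]. -/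

import Mathlib

/-- The compatibility between the maps `μ` and `ν`: writing
`μ([[x₁,y₁],[x₂,y₂]]) = [[y₁',x₁'],[y₂',x₂']]`, one has
`ν([[x₁,y₁'],[x₂,y₂']]) = [[-y₁,-x₁'],[-y₂,-x₂']]` whenever the relevant
denominators are nonzero. -/
theorem devron_stmt_17 (x₁ x₂ y₁ y₂ : ℂ)
    (h1 : x₁ + y₁ ≠ 0) (h2 : x₂ + y₂ ≠ 0)
    (y₁' x₁' y₂' x₂' : ℂ)
    (hy₁' : y₁' = y₁ * (x₂ + y₂) / (x₁ + y₁))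
    (hx₁' : x₁' = x₁ * (x₂ + y₂) / (x₁ + y₁))
    (hy₂' : y₂' = y₂ * (x₁ + y₁) / (x₂ + y₂))
    (hx₂' : x₂' = x₂ * (x₁ + y₁) / (x₂ + y₂))
    (hd1 : x₂ - y₁' ≠ 0) (hd2 : x₁ - y₂' ≠ 0) :
    -(y₁' * (x₁ - y₂') / (x₂ - y₁')) = -y₁ ∧
    -(x₁ * (x₂ - y₁') / (x₁ - y₂')) = -x₁' ∧
    -(y₂' * (x₂ - y₁') / (x₁ - y₂')) = -y₂ ∧
    -(x₂ * (x₁ - y₂') / (x₂ - y₁')) = -x₂' := by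
  subst hy₁' hx₁' hy₂' hx₂'
  have key1 : x₂ - y₁ * (x₂ + y₂) / (x₁ + y₁) = (x₁ * x₂ - y₁ * y₂) / (x₁ + y₁) := by
    field_simp; ring
  have key2 : x₁ - y₂ * (x₁ + y₁) / (x₂ + y₂) = (x₁ * x₂ - y₁ * y₂) / (x₂ + y₂) := by
    field_simp; ring
  rw [key1] at hd1 ⊢
  rw [key2] at hd2 ⊢
  have h3 : x₁ * x₂ - y₁ * y₂ ≠ 0 := fun h => hd1 (by rw [h, zero_div])
  refine ⟨?_, ?_, ?_, ?_⟩ <;> (field_simp <;> rw [mul_div_assoc, div_self (by intro h; apply h3; linear_combination h), mul_one])
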